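/- If ξ₀ is large enough then there is a time T₁ > 0 such that the solution (ξ_{ξ₀}, θ_{ξ₀}, α_{ξ₀}) of (*) with initial condition (ξ₀, θ*, π/2) satisfies ξ'_{ξ₀}(T₁)/θ'_{ξ₀}(T₁) = −1 while θ'_{ξ₀}(t) > 0 and ξ'_{ξ₀}(t) < 0 for all t ∈ (0, T₁]. -/

import Mathlib

/-- The constant `m = m₁ + m₂ + 2/g`. -/
noncomputable def mconst (g m₁ m₂ : ℕ) : ℝ := (m₁ : ℝ) + (m₂ : ℝ) + 2 / (g : ℝ)

/-- The angle `θ* = arctan √(m₁/m₂)`. -/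
noncomputable def thetaStar (m₁ m₂ : ℕ) : ℝ :=
  Real.arctan (Real.sqrt ((m₁ : ℝ) / (m₂ : ℝ)))

/-- `l(θ) = m₁ cos² θ - m₂ sin² θ`. -/
noncomputable def lfun (m₁ m₂ : ℕ) (θ : ℝ) : ℝ :=
  (m₁ : ℝ) * Real.cos θ ^ 2 - (m₂ : ℝ) * Real.sin θ ^ 2

/-- `(ξ, θ, α)` is a (globally defined) solution of the ODE system (*):
`ξ' = cos α · sin 2θ`, `θ' = sin α · sin 2θ`,
`α' = sin α · sin 2θ · (exp((4/g)ξ) - m) + 2 cos α · l(θ)`. -/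
def IsSolution (g m₁ m₂ : ℕ) (ξ θ α : ℝ → ℝ) : Prop :=
  ∀ t : ℝ,
    HasDerivAt ξ (Real.cos (α t) * Real.sin (2 * θ t)) t ∧
    HasDerivAt θ (Real.sin (α t) * Real.sin (2 * θ t)) t ∧
    HasDerivAt α
      (Real.sin (α t) * Real.sin (2 * θ t) *
          (Real.exp (4 / (g : ℝ) * ξ t) - mconst g m₁ m₂) +
        2 * Real.cos (α t) * lfun m₁ m₂ (θ t)) t

/-- `Ξ Θ A` is the family of solutions of (*) indexed by the initial value `ξ₀`,
with initial condition `(ξ, θ, α)(0) = (ξ₀, θ*, π/2)`. -/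
def IsShootingFamily (g m₁ m₂ : ℕ) (Ξ Θ A : ℝ → ℝ → ℝ) : Prop :=
  ∀ ξ₀ : ℝ, IsSolution g m₁ m₂ (Ξ ξ₀) (Θ ξ₀) (A ξ₀) ∧
    Ξ ξ₀ 0 = ξ₀ ∧ Θ ξ₀ 0 = thetaStar m₁ m₂ ∧ A ξ₀ 0 = Real.pi / 2

/-- `ξ₀` is of type 1: there is `T > 0` with `θ_{ξ₀}(T) = θ*` and
`ξ'_{ξ₀}(t) ≠ 0` for all `t ∈ (0, T)`. -/
def Type1 (m₁ m₂ : ℕ) (Ξ Θ A : ℝ → ℝ → ℝ) (ξ₀ : ℝ) : Prop :=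
  ∃ T > (0 : ℝ), Θ ξ₀ T = thetaStar m₁ m₂ ∧
    ∀ t ∈ Set.Ioo (0 : ℝ) T, Real.cos (A ξ₀ t) * Real.sin (2 * Θ ξ₀ t) ≠ 0


open Real Set

/-- Mean value bound: globally differentiable with bounded derivative is Lipschitz. -/
lemma lip_aux {f d : ℝ → ℝ} {C : ℝ} (hf : ∀ t, HasDerivAt f (d t) t)
    (hd : ∀ t, |d t| ≤ C) (x y : ℝ) : |f y - f x| ≤ C * |y - x| := by
  have := Convex.norm_image_sub_le_of_norm_hasDerivWithin_le
    (f := f) (f' := d) (s := (Set.univ : Set ℝ))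
    (fun t _ => (hf t).hasDerivWithinAt)
    (fun t _ => by simpa [Real.norm_eq_abs] using hd t)
    convex_univ (Set.mem_univ x) (Set.mem_univ y)
  simpa [Real.norm_eq_abs] using this

lemma sin_ge_of_mem {w : ℝ} (hw : w ∈ Set.Icc (Real.pi/2) (3*Real.pi/4)) :
    Real.sqrt 2 / 2 ≤ Real.sin w := by
  have hpi := Real.pi_pos
  have h1 : Real.sin w = Real.sin (Real.pi - w) := (Real.sin_pi_sub w).symm
  rw [h1, ← Real.sin_pi_div_four]
  refine Real.strictMonoOn_sin.monotoneOn ?_ ?_ ?_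
  · constructor <;> [linarith; linarith]
  · obtain ⟨h2, h3⟩ := hw; constructor <;> [linarith; linarith]
  · obtain ⟨h2, h3⟩ := hw; linarith

lemma lfun_abs_le (m₁ m₂ : ℕ) (s : ℝ) : |lfun m₁ m₂ s| ≤ (m₁ : ℝ) + m₂ := by
  have h1 := Real.sin_sq_le_one s
  have h2 := Real.cos_sq_le_one s
  have h3 := sq_nonneg (Real.sin s)
  have h4 := sq_nonneg (Real.cos s)
  have h5 : (0:ℝ) ≤ (m₁ : ℝ) := by positivity
  have h6 : (0:ℝ) ≤ (m₂ : ℝ) := by positivity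
  rw [abs_le]
  constructor <;> (unfold lfun; nlinarith)

set_option maxHeartbeats 1600000 in
/-- Lemma 4.3: for `ξ₀` large enough there is a time `T₁ > 0` with
`ξ'(T₁)/θ'(T₁) = -1`, while `θ' > 0` and `ξ' < 0` on `(0, T₁]`. -/
theorem stmt15 (g m₁ m₂ : ℕ) (hg : g = 1 ∨ g = 2 ∨ g = 3 ∨ g = 4 ∨ g = 6)
    (hm₁ : 0 < m₁) (hm₂ : 0 < m₂)
    (Ξ Θ A : ℝ → ℝ → ℝ) (hfam : IsShootingFamily g m₁ m₂ Ξ Θ A) :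
    ∃ R : ℝ, ∀ ξ₀ > R, ∃ T₁ > (0 : ℝ),
      (Real.cos (A ξ₀ T₁) * Real.sin (2 * Θ ξ₀ T₁)) /
          (Real.sin (A ξ₀ T₁) * Real.sin (2 * Θ ξ₀ T₁)) = -1 ∧
      ∀ t ∈ Set.Ioc (0 : ℝ) T₁,
        0 < Real.sin (A ξ₀ t) * Real.sin (2 * Θ ξ₀ t) ∧
        Real.cos (A ξ₀ t) * Real.sin (2 * Θ ξ₀ t) < 0 := by
  have hpi := Real.pi_pos
  have hgpos : (0:ℝ) < (g:ℝ) := by rcases hg with h|h|h|h|h <;> simp [h] <;> norm_num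
  -- θ* ∈ (0, π/2)
  have hθs1 : 0 < thetaStar m₁ m₂ := by
    unfold thetaStar
    have hx : 0 < Real.sqrt ((m₁ : ℝ) / (m₂ : ℝ)) := by
      apply Real.sqrt_pos.2
      apply div_pos <;> exact_mod_cast (by assumption)
    have h := Real.arctan_strictMono hx
    rwa [Real.arctan_zero] at h
  have hθs2 : thetaStar m₁ m₂ < Real.pi / 2 := Real.arctan_lt_pi_div_two _
  set s0 : ℝ := Real.sin (2 * thetaStar m₁ m₂) with hs0_def
  have hs0 : 0 < s0 := Real.sin_pos_of_pos_of_lt_pi (by linarith) (by linarith)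
  set ε : ℝ := s0 / 4 with hε_def
  have hε : 0 < ε := by positivity
  set K : ℝ := Real.pi / (4 * ε) + 1 with hK_def
  have hK : 0 < K := by positivity
  have hKε : Real.pi / 4 < K * ε := by
    have : K * ε = Real.pi / 4 + ε := by rw [hK_def]; field_simp
    linarith
  set c' : ℝ := Real.sqrt 2 / 2 * (s0 / 2) with hc'_def
  have hc' : 0 < c' := by
    have : (0:ℝ) < Real.sqrt 2 := Real.sqrt_pos.2 (by norm_num)
    positivity
  set mm : ℝ := mconst g m₁ m₂ with hmm_def
  have hmmpos : 0 < mm := by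
    have h1 : (0:ℝ) < (m₁ : ℝ) := by exact_mod_cast hm₁
    have h2 : (0:ℝ) ≤ (m₂ : ℝ) := by positivity
    have h3 : (0:ℝ) < 2 / (g:ℝ) := by positivity
    rw [hmm_def]; unfold mconst; linarith
  set M : ℝ := mm + (2 * ((m₁:ℝ) + m₂) + K) / c' with hM_def
  have hMm : mm ≤ M := by
    rw [hM_def]
    have : 0 ≤ (2 * ((m₁:ℝ) + m₂) + K) / c' := by positivity
    linarith
  have hM0 : 0 < M := lt_of_lt_of_le hmmpos hMm
  clear_value s0 ε K c' mm M
  refine ⟨ε + (g:ℝ)/4 * Real.log M, ?_⟩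
  intro ξ₀ hξ₀
  obtain ⟨hsol, hx0, hy0, ha0⟩ := hfam ξ₀
  set x : ℝ → ℝ := Ξ ξ₀ with hx_def
  set y : ℝ → ℝ := Θ ξ₀ with hy_def
  set a : ℝ → ℝ := A ξ₀ with ha_def
  have hx' : ∀ t, HasDerivAt x (Real.cos (a t) * Real.sin (2 * y t)) t :=
    fun t => (hsol t).1
  have hy' : ∀ t, HasDerivAt y (Real.sin (a t) * Real.sin (2 * y t)) t :=
    fun t => (hsol t).2.1
  set D : ℝ → ℝ := fun t => Real.sin (a t) * Real.sin (2 * y t) *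
      (Real.exp (4 / (g : ℝ) * x t) - mm) + 2 * Real.cos (a t) * lfun m₁ m₂ (y t)
    with hD_def
  have ha' : ∀ t, HasDerivAt a (D t) t := by
    intro t
    simp only [hD_def, hmm_def]
    exact (hsol t).2.2
  have hxc : Continuous x := Differentiable.continuous (fun t => (hx' t).differentiableAt)
  have hyc : Continuous y := Differentiable.continuous (fun t => (hy' t).differentiableAt)
  have hac : Continuous a := Differentiable.continuous (fun t => (ha' t).differentiableAt)
  have hDc : Continuous D := by
    rw [hD_def]
    unfold lfun
    fun_prop
  clear_value x y a D
  -- ξ stays above ξ₀ - ε on [0, ε]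
  have hxlow : ∀ t ∈ Set.Icc (0:ℝ) ε, ξ₀ - ε ≤ x t := by
    intro t ht
    have hb : ∀ s, |Real.cos (a s) * Real.sin (2 * y s)| ≤ 1 := by
      intro s
      rw [abs_mul]
      exact mul_le_one₀ (Real.abs_cos_le_one _) (abs_nonneg _) (Real.abs_sin_le_one _)
    have := lip_aux hx' hb 0 t
    rw [hx0] at this
    have h1 : |x t - ξ₀| ≤ t := by
      have h2 : |t - 0| = t := by rw [sub_zero, abs_of_nonneg ht.1]
      rw [h2, one_mul] at this; exact this
    have := abs_le.1 h1
    linarith [ht.2, this.1]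
  -- sin(2 y t) ≥ s0/2 on [0, ε]
  have hsin2y : ∀ t ∈ Set.Icc (0:ℝ) ε, s0 / 2 ≤ Real.sin (2 * y t) := by
    intro t ht
    have hf : ∀ s, HasDerivAt (fun u => Real.sin (2 * y u))
        (Real.cos (2 * y s) * (2 * (Real.sin (a s) * Real.sin (2 * y s)))) s :=
      fun s => ((hy' s).const_mul 2).sin
    have hb : ∀ s, |Real.cos (2 * y s) * (2 * (Real.sin (a s) * Real.sin (2 * y s)))| ≤ 2 := by
      intro s
      rw [abs_mul, abs_mul, abs_mul]
      have h1 := Real.abs_cos_le_one (2 * y s)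
      have h2 := Real.abs_sin_le_one (a s)
      have h3 := Real.abs_sin_le_one (2 * y s)
      have h4 : |Real.sin (a s)| * |Real.sin (2 * y s)| ≤ 1 :=
        mul_le_one₀ h2 (abs_nonneg _) h3
      have h5 : |(2:ℝ)| = 2 := by norm_num
      rw [h5]
      nlinarith [abs_nonneg (Real.cos (2 * y s)), abs_nonneg (Real.sin (a s)),
        abs_nonneg (Real.sin (2 * y s))]
    have := lip_aux hf hb 0 t
    have hy00 : Real.sin (2 * y 0) = s0 := by rw [hy0, ← hs0_def]
    rw [hy00] at this
    have h2 : |t - 0| = t := by rw [sub_zero, abs_of_nonneg ht.1]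
    rw [h2] at this
    have := abs_le.1 this
    have hεb : t ≤ ε := ht.2
    have : s0 - 2 * ε ≤ Real.sin (2 * y t) := by linarith [this.1]
    rw [hε_def] at this
    linarith
  -- exponential term is large on [0, ε]
  have hE : ∀ t ∈ Set.Icc (0:ℝ) ε, M ≤ Real.exp (4 / (g:ℝ) * x t) := by
    intro t ht
    have h1 : ξ₀ - ε ≤ x t := hxlow t ht
    have h2 : (g:ℝ)/4 * Real.log M < ξ₀ - ε := by linarith
    have h3 : Real.log M < 4 / (g:ℝ) * (ξ₀ - ε) := by
      have h4 : 4 / (g:ℝ) * ((g:ℝ)/4 * Real.log M) = Real.log M := by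
        field_simp
      calc Real.log M = 4 / (g:ℝ) * ((g:ℝ)/4 * Real.log M) := h4.symm
        _ < 4 / (g:ℝ) * (ξ₀ - ε) := by
            apply mul_lt_mul_of_pos_left h2 (by positivity)
    have h5 : 4 / (g:ℝ) * (ξ₀ - ε) ≤ 4 / (g:ℝ) * x t :=
      mul_le_mul_of_nonneg_left h1 (by positivity)
    calc M = Real.exp (Real.log M) := (Real.exp_log hM0).symm
      _ ≤ Real.exp (4 / (g:ℝ) * x t) := Real.exp_le_exp.2 (by linarith)
  -- derivative lower bound in the region
  have hF3 : ∀ t ∈ Set.Icc (0:ℝ) ε, a t ∈ Set.Icc (Real.pi/2) (3*Real.pi/4) → K ≤ D t := by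
    intro t ht hat
    have hsa : Real.sqrt 2 / 2 ≤ Real.sin (a t) := sin_ge_of_mem hat
    have hsy : s0 / 2 ≤ Real.sin (2 * y t) := hsin2y t ht
    have h1 : c' ≤ Real.sin (a t) * Real.sin (2 * y t) := by
      rw [hc'_def]
      apply mul_le_mul hsa hsy (by linarith)
      have : (0:ℝ) < Real.sqrt 2 := Real.sqrt_pos.2 (by norm_num)
      linarith
    have h2 : (0:ℝ) ≤ M - mm := by linarith
    have h3 : M - mm ≤ Real.exp (4 / (g:ℝ) * x t) - mm := by
      have := hE t ht; linarith
    have hterm1 : c' * (M - mm) ≤ Real.sin (a t) * Real.sin (2 * y t) *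
        (Real.exp (4 / (g:ℝ) * x t) - mm) :=
      mul_le_mul h1 h3 h2 (le_trans hc'.le h1)
    have hcM : c' * (M - mm) = 2 * ((m₁:ℝ) + m₂) + K := by
      have hMmm : M - mm = (2 * ((m₁:ℝ) + m₂) + K) / c' := by rw [hM_def]; ring
      rw [hMmm, mul_div_cancel₀ _ hc'.ne']
    have hterm2 : -(2 * ((m₁:ℝ) + m₂)) ≤ 2 * Real.cos (a t) * lfun m₁ m₂ (y t) := by
      have hl := abs_le.1 (lfun_abs_le m₁ m₂ (y t))
      have hc := abs_le.1 (Real.abs_cos_le_one (a t))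
      nlinarith [hl.1, hl.2, hc.1, hc.2]
    have hDt : D t = Real.sin (a t) * Real.sin (2 * y t) *
        (Real.exp (4 / (g:ℝ) * x t) - mm) + 2 * Real.cos (a t) * lfun m₁ m₂ (y t) := by
      simp only [hD_def]
    linarith
  -- the invariant-region set
  set G : Set ℝ := {t | t ∈ Set.Icc (0:ℝ) ε ∧
      ∀ s ∈ Set.Icc (0:ℝ) t, a s ∈ Set.Icc (Real.pi/2) (3*Real.pi/4)} with hG_def
  have h0G : (0:ℝ) ∈ G := by
    constructor
    · exact ⟨le_refl 0, hε.le⟩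
    · intro s hs
      have : s = 0 := le_antisymm hs.2 hs.1
      rw [this, ha0]
      constructor <;> linarith
  have hGne : G.Nonempty := ⟨0, h0G⟩
  have hGbdd : BddAbove G := ⟨ε, fun t ht => ht.1.2⟩
  set τ : ℝ := sSup G with hτ_def
  have hτ0 : 0 ≤ τ := le_csSup hGbdd h0G
  have hτε : τ ≤ ε := csSup_le hGne fun t ht => ht.1.2
  have hmemle : ∀ u ∈ G, u ≤ τ := fun u hu => le_csSup hGbdd hu
  have hexlt : ∀ s, s < τ → ∃ u ∈ G, s < u := fun s hs => exists_lt_of_lt_csSup hGne hs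
  clear_value τ
  -- τ ∈ G
  have hτG : τ ∈ G := by
    have hIco : ∀ s ∈ Set.Ico (0:ℝ) τ, a s ∈ Set.Icc (Real.pi/2) (3*Real.pi/4) := by
      intro s hs
      obtain ⟨t, htG, hst⟩ := hexlt s hs.2
      exact htG.2 s ⟨hs.1, hst.le⟩
    have hτin : a τ ∈ Set.Icc (Real.pi/2) (3*Real.pi/4) := by
      rcases eq_or_lt_of_le hτ0 with h0 | h0
      · rw [← h0, ha0]
        constructor <;> linarith
      · have hcl : τ ∈ closure (Set.Ico (0:ℝ) τ) := by
          rw [closure_Ico (ne_of_lt h0)]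
          exact ⟨hτ0, le_refl τ⟩
        have := map_mem_closure hac hcl hIco
        rwa [IsClosed.closure_eq isClosed_Icc] at this
    refine ⟨⟨hτ0, hτε⟩, ?_⟩
    intro s hs
    rcases lt_or_eq_of_le hs.2 with h | h
    · exact hIco s ⟨hs.1, h⟩
    · rw [h]
      exact hτin
  -- quantitative growth on [0, τ]
  have hquant : ∀ t ∈ Set.Icc (0:ℝ) τ, Real.pi/2 + K * t ≤ a t := by
    have hφ' : ∀ t, HasDerivAt (fun u => a u - K * u) (D t - K * 1) t :=
      fun t => (ha' t).sub ((hasDerivAt_id t).const_mul K)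
    have hmono : MonotoneOn (fun u => a u - K * u) (Set.Icc (0:ℝ) τ) := by
      apply monotoneOn_of_deriv_nonneg (convex_Icc 0 τ)
      · exact (hac.sub (continuous_const.mul continuous_id)).continuousOn
      · intro u hu
        exact ((hφ' u).differentiableAt).differentiableWithinAt
      · intro u hu
        rw [interior_Icc] at hu
        rw [(hφ' u).deriv]
        have hu1 : u ∈ Set.Icc (0:ℝ) ε := ⟨hu.1.le, le_trans hu.2.le hτε⟩
        have hu2 : a u ∈ Set.Icc (Real.pi/2) (3*Real.pi/4) :=
          hτG.2 u ⟨hu.1.le, hu.2.le⟩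
        have := hF3 u hu1 hu2
        linarith
    intro t ht
    have := hmono (Set.left_mem_Icc.2 hτ0) ht ht.1
    simp only [mul_zero, sub_zero] at this
    rw [ha0] at this
    linarith
  -- the endpoint value
  have hend : a τ = 3 * Real.pi / 4 := by
    by_contra hne
    have hle : a τ ≤ 3 * Real.pi / 4 := (hτG.2 τ ⟨hτ0, le_refl τ⟩).2
    have hlt : a τ < 3 * Real.pi / 4 := lt_of_le_of_ne hle hne
    have hτlt : τ < ε := by
      rcases lt_or_eq_of_le hτε with h | h
      · exact h
      · exfalso
        have := hquant τ ⟨hτ0, le_refl τ⟩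
        rw [h] at this hlt
        linarith
    set U : Set ℝ := {s | 0 < D s ∧ a s < 3 * Real.pi / 4} with hU_def
    have hUopen : IsOpen U := by
      have h1 : IsOpen {s : ℝ | 0 < D s} := isOpen_lt continuous_const hDc
      have h2 : IsOpen {s : ℝ | a s < 3 * Real.pi / 4} := isOpen_lt hac continuous_const
      exact h1.inter h2
    have hτU : τ ∈ U := by
      refine ⟨lt_of_lt_of_le hK (hF3 τ ⟨hτ0, hτε⟩ (hτG.2 τ ⟨hτ0, le_refl τ⟩)), hlt⟩
    obtain ⟨η, hη, hball⟩ := Metric.isOpen_iff.1 hUopen τ hτU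
    set η' : ℝ := min (η/2) (ε - τ) with hη'_def
    have hη' : 0 < η' := lt_min (by linarith) (by linarith)
    have hη'le : η' ≤ η / 2 := min_le_left _ _
    have hη'2 : η' ≤ ε - τ := min_le_right _ _
    clear_value η'
    have hsub : Set.Icc τ (τ + η') ⊆ U := by
      intro s hs
      apply hball
      rw [Metric.mem_ball, Real.dist_eq]
      have h1 : |s - τ| ≤ η' := by
        rw [abs_le]; constructor <;> [linarith [hs.1]; linarith [hs.2]]
      linarith
    have hmono2 : MonotoneOn a (Set.Icc τ (τ + η')) := by
      apply monotoneOn_of_deriv_nonneg (convex_Icc _ _)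
      · exact hac.continuousOn
      · intro u hu
        exact ((ha' u).differentiableAt).differentiableWithinAt
      · intro u hu
        rw [interior_Icc] at hu
        rw [(ha' u).deriv]
        exact (hsub ⟨hu.1.le, hu.2.le⟩).1.le
    have hnew : τ + η' ∈ G := by
      refine ⟨⟨by linarith, by linarith⟩, ?_⟩
      intro s hs
      rcases le_total s τ with h | h
      · exact hτG.2 s ⟨hs.1, h⟩
      · have hsI : s ∈ Set.Icc τ (τ + η') := ⟨h, hs.2⟩
        have hU' := hsub hsI
        constructor
        · have h1 : a τ ≤ a s := hmono2 (Set.left_mem_Icc.2 (by linarith)) hsI h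
          have h2 : Real.pi/2 ≤ a τ := (hτG.2 τ ⟨hτ0, le_refl τ⟩).1
          linarith
        · exact hU'.2.le
    have := hmemle _ hnew
    linarith
  have hτpos : 0 < τ := by
    rcases lt_or_eq_of_le hτ0 with h | h
    · exact h
    · exfalso
      rw [← h] at hend
      rw [ha0] at hend
      linarith
  -- final assembly
  refine ⟨τ, hτpos, ?_, ?_⟩
  · have hs2 : 0 < Real.sin (2 * y τ) :=
      lt_of_lt_of_le (by positivity) (hsin2y τ ⟨hτ0, hτε⟩)
    have hrw : (3 * Real.pi / 4 : ℝ) = Real.pi - Real.pi/4 := by ring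
    have hsa : Real.sin (a τ) = Real.sqrt 2 / 2 := by
      rw [hend, hrw, Real.sin_pi_sub, Real.sin_pi_div_four]
    have hca : Real.cos (a τ) = -(Real.sqrt 2 / 2) := by
      rw [hend, hrw, Real.cos_pi_sub, Real.cos_pi_div_four]
    have hsqrt : (0:ℝ) < Real.sqrt 2 := Real.sqrt_pos.2 (by norm_num)
    rw [hsa, hca]
    rw [div_eq_iff (by positivity : Real.sqrt 2 / 2 * Real.sin (2 * y τ) ≠ 0).elim]
    ring
  · intro t ht
    have htε : t ∈ Set.Icc (0:ℝ) ε := ⟨ht.1.le, le_trans ht.2 hτε⟩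
    have hreg : a t ∈ Set.Icc (Real.pi/2) (3*Real.pi/4) := hτG.2 t ⟨ht.1.le, ht.2⟩
    have hs2 : 0 < Real.sin (2 * y t) :=
      lt_of_lt_of_le (by linarith : (0:ℝ) < s0 / 2) (hsin2y t htε)
    have hsin_at : 0 < Real.sin (a t) :=
      Real.sin_pos_of_pos_of_lt_pi (by linarith [hreg.1]) (by linarith [hreg.2])
    have halt : Real.pi/2 < a t := by
      have := hquant t ⟨ht.1.le, ht.2⟩
      nlinarith [mul_pos hK ht.1]
    have hcos_neg : Real.cos (a t) < 0 :=
      Real.cos_neg_of_pi_div_two_lt_of_lt halt (by linarith [hreg.2])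
    exact ⟨mul_pos hsin_at hs2, mul_neg_of_neg_of_pos hcos_neg hs2⟩
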